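/- Let n > 2, 0 < delta < 1, epsilon in [0,1/2], b > c > 0, lambda, gamma in [0,1], r in [-1,1]. Define A = 1 + delta(n-2)(lambda+gamma), D = delta(1 + (n-3)(lambda+gamma-2 lambda epsilon)), Lambda1 = delta^2 gamma (n-2)(gamma b + lambda c (1-2epsilon)) - b delta D (1 + lambda(n-2)(1-2epsilon)), Lambda2 = b delta A (1 + lambda(n-2)(1-2epsilon)) + c A D, Lambda3 = c A^2. With K2 = (B2 + B3 C2)/(1 - B3 C3) as defined from the coefficients B2, B3, C2, C3 of the resident strategy, we have sign(K2 b - c) = sign(Lambda1 r^2 + Lambda2 r - Lambda3); in particular K2 b - c = 0 iff Lambda1 r^2 + Lambda2 r - Lambda3 = 0, and likewise for strict inequalities in both directions. -/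

import Mathlib

set_option maxHeartbeats 1000000


/-- The sign of the slope `K₂ b - c` of the mutant payoff relation agrees with the sign
of the quadratic `Λ₁ r² + Λ₂ r - Λ₃`. -/
theorem slope_sign_iff_quadratic_sign (n : ℕ) (δ ε b c lam γ r : ℝ)
    (hn : 2 < n) (hδ : 0 < δ) (hδ1 : δ < 1) (hε : 0 ≤ ε) (hε' : ε ≤ 1 / 2)
    (hc : 0 < c) (hbc : c < b)
    (hlam : lam ∈ Set.Icc (0 : ℝ) 1) (hγ : γ ∈ Set.Icc (0 : ℝ) 1)
    (hr : r ∈ Set.Icc (-1 : ℝ) 1) :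
    let A := 1 + δ * ((n : ℝ) - 2) * (lam + γ)
    let D := δ * (1 + ((n : ℝ) - 3) * (lam + γ - 2 * lam * ε))
    let E := 1 - δ * r + δ * (lam + γ) * ((n : ℝ) - 2) - δ * r * ((n : ℝ) - 3) * (lam + γ - 2 * lam * ε)
    let Λ1 := δ ^ 2 * γ * ((n : ℝ) - 2) * (γ * b + lam * c * (1 - 2 * ε)) -
      b * δ * D * (1 + lam * ((n : ℝ) - 2) * (1 - 2 * ε))
    let Λ2 := b * δ * A * (1 + lam * ((n : ℝ) - 2) * (1 - 2 * ε)) + c * A * D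
    let Λ3 := c * A ^ 2
    let B2 := δ * r * (1 + lam * ((n : ℝ) - 2) * (1 - 2 * ε)) / A
    let B3 := δ * γ * r * ((n : ℝ) - 2) / A
    let C2 := δ * γ * r / E
    let C3 := δ * lam * r * (1 - 2 * ε) / E
    let K2 := (B2 + B3 * C2) / (1 - B3 * C3)
    (K2 * b - c = 0 ↔ Λ1 * r ^ 2 + Λ2 * r - Λ3 = 0) ∧
    (K2 * b - c > 0 ↔ Λ1 * r ^ 2 + Λ2 * r - Λ3 > 0) ∧
    (K2 * b - c < 0 ↔ Λ1 * r ^ 2 + Λ2 * r - Λ3 < 0) := by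
  obtain ⟨hl0, hl1⟩ := hlam
  obtain ⟨hg0, hg1⟩ := hγ
  obtain ⟨hr0, hr1⟩ := hr
  have hn3 : (3 : ℝ) ≤ (n : ℝ) := by exact_mod_cast hn
  intro A D E Λ1 Λ2 Λ3 B2 B3 C2 C3 K2
  have hA : 0 < A := by
    simp only [A]
    nlinarith [mul_nonneg (mul_nonneg hδ.le (by linarith : (0:ℝ) ≤ (n:ℝ) - 2)) (by linarith : (0:ℝ) ≤ lam + γ)]
  have hD0 : 0 ≤ D := by
    simp only [D]
    have hs : 0 ≤ lam + γ - 2 * lam * ε := by nlinarith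
    nlinarith [mul_nonneg (by linarith : (0:ℝ) ≤ (n:ℝ) - 3) hs]
  have hDA : D < A := by
    simp only [D, A]
    nlinarith [mul_nonneg (mul_nonneg hδ.le (by linarith : (0:ℝ) ≤ (n:ℝ) - 3)) (mul_nonneg hl0 hε),
      mul_nonneg (mul_nonneg hδ.le (by linarith : (0:ℝ) ≤ (n:ℝ) - 3)) (by linarith : (0:ℝ) ≤ lam + γ),
      mul_nonneg hδ.le (by linarith : (0:ℝ) ≤ lam + γ)]
  have hEeq : E = A - r * D := by simp only [E, A, D]; ring
  have hE : 0 < E := by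
    rw [hEeq]
    nlinarith [mul_nonneg (by linarith : (0:ℝ) ≤ 1 - r) hD0]
  -- the key positive denominator
  have hP : 0 < A * E - δ ^ 2 * γ * lam * r ^ 2 * ((n : ℝ) - 2) * (1 - 2 * ε) := by
    have h1 : δ * γ * |r| * ((n : ℝ) - 2) < A := by
      have : |r| ≤ 1 := abs_le.mpr ⟨hr0, hr1⟩
      simp only [A]
      nlinarith [abs_nonneg r, mul_nonneg (mul_nonneg hδ.le hg0) (by linarith : (0:ℝ) ≤ (n:ℝ) - 2),
        mul_nonneg (mul_nonneg hδ.le hl0) (by linarith : (0:ℝ) ≤ (n:ℝ) - 2)]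
    have h2 : δ * lam * |r| * (1 - 2 * ε) < E := by
      have habs : |r| ≤ 1 := abs_le.mpr ⟨hr0, hr1⟩
      have hrD : r * D ≤ D := by nlinarith [mul_nonneg (by linarith : (0:ℝ) ≤ 1 - r) hD0]
      have hAD2 : δ * lam < A - D := by
        simp only [A, D]
        nlinarith [mul_nonneg hδ.le hg0,
          mul_nonneg (mul_nonneg (mul_nonneg hδ.le (by linarith : (0:ℝ) ≤ (n:ℝ) - 3)) hl0) hε,
          mul_nonneg hδ.le hl0]
      have hstep : δ * lam * |r| * (1 - 2 * ε) ≤ δ * lam := by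
        nlinarith [mul_nonneg (mul_nonneg hδ.le hl0)
            (mul_nonneg (by linarith : (0:ℝ) ≤ 1 - |r|) (by linarith : (0:ℝ) ≤ 1 - 2 * ε)),
          mul_nonneg (mul_nonneg (mul_nonneg hδ.le hl0) hε) (abs_nonneg r),
          mul_nonneg (mul_nonneg hδ.le hl0) hε]
      rw [hEeq]; linarith
    have h3 : (δ * γ * |r| * ((n : ℝ) - 2)) * (δ * lam * |r| * (1 - 2 * ε)) < A * E := by
      have ha : 0 ≤ δ * γ * |r| * ((n : ℝ) - 2) := by
        have h := abs_nonneg r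
        have : (0:ℝ) ≤ (n:ℝ) - 2 := by linarith
        positivity
      have hb : 0 ≤ δ * lam * |r| * (1 - 2 * ε) := by
        have h := abs_nonneg r
        have : (0:ℝ) ≤ 1 - 2 * ε := by linarith
        positivity
      exact mul_lt_mul'' h1 h2 ha hb
    have hrr : |r| * |r| = r ^ 2 := by rw [← abs_mul, ← sq, abs_sq]
    have hrw : δ * γ * |r| * ((n : ℝ) - 2) * (δ * lam * |r| * (1 - 2 * ε)) =
        δ ^ 2 * γ * lam * r ^ 2 * ((n : ℝ) - 2) * (1 - 2 * ε) := by rw [← hrr]; ring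
    linarith [h3, hrw.ge, hrw.le]
  have hBCeq : B3 * C3 = δ ^ 2 * γ * lam * r ^ 2 * ((n : ℝ) - 2) * (1 - 2 * ε) / (A * E) := by
    simp only [B3, C3]
    field_simp
  have hBC : 1 - B3 * C3 > 0 := by
    rw [gt_iff_lt, hBCeq, sub_pos, div_lt_one (by positivity)]
    linarith [hP]
  have hd : (1 : ℝ) - B3 * C3 ≠ 0 := ne_of_gt hBC
  have e1 : (1 - B3 * C3) * (A * E) =
      A * E - δ ^ 2 * γ * lam * r ^ 2 * ((n : ℝ) - 2) * (1 - 2 * ε) := by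
    rw [hBCeq]
    field_simp
  have e2 : (B2 + B3 * C2) * (A * E) =
      δ * r * (1 + lam * ((n : ℝ) - 2) * (1 - 2 * ε)) * E + δ ^ 2 * γ ^ 2 * r ^ 2 * ((n : ℝ) - 2) := by
    simp only [B2, B3, C2]
    field_simp
  have hK : K2 * b - c = ((B2 + B3 * C2) * b - c * (1 - B3 * C3)) / (1 - B3 * C3) := by
    simp only [K2]
    field_simp
  have heq : (K2 * b - c) * ((1 - B3 * C3) * (A * E)) = Λ1 * r ^ 2 + Λ2 * r - Λ3 := by
    calc (K2 * b - c) * ((1 - B3 * C3) * (A * E))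
        = (((B2 + B3 * C2) * b - c * (1 - B3 * C3)) / (1 - B3 * C3)) *
            ((1 - B3 * C3) * (A * E)) := by rw [hK]
      _ = ((B2 + B3 * C2) * b - c * (1 - B3 * C3)) * (A * E) := by
            rw [div_mul_eq_mul_div, mul_comm (1 - B3 * C3) (A * E), ← mul_assoc,
              mul_div_assoc, div_self hd, mul_one]
      _ = b * ((B2 + B3 * C2) * (A * E)) - c * ((1 - B3 * C3) * (A * E)) := by ring
      _ = b * (δ * r * (1 + lam * ((n : ℝ) - 2) * (1 - 2 * ε)) * E +
            δ ^ 2 * γ ^ 2 * r ^ 2 * ((n : ℝ) - 2)) -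
          c * (A * E - δ ^ 2 * γ * lam * r ^ 2 * ((n : ℝ) - 2) * (1 - 2 * ε)) := by
            rw [e1, e2]
      _ = Λ1 * r ^ 2 + Λ2 * r - Λ3 := by
            simp only [Λ1, Λ2, Λ3, A, D, E]
            ring
  have hP' : 0 < (1 - B3 * C3) * (A * E) := mul_pos hBC (by positivity)
  constructor
  · constructor
    · intro h; rw [← heq, h, zero_mul]
    · intro h
      have := heq.trans h.symm.symm
      rw [h] at heq
      rcases mul_eq_zero.mp heq with h' | h'
      · exact h'
      · exact absurd h' (ne_of_gt hP')
  constructor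
  · constructor
    · intro h; rw [← heq]; exact mul_pos h hP'
    · intro h; rw [← heq] at h; exact (mul_pos_iff_of_pos_right hP').mp h
  · constructor
    · intro h; rw [← heq]; exact mul_neg_of_neg_of_pos h hP'
    · intro h; rw [← heq] at h; by_contra hh; push_neg at hh; exact absurd h (not_lt.mpr (mul_nonneg hh hP'.le))
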